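/- For every n ≥ 1, the group Homeo(I^n, ∂I^n) is not bi-orderable. -/

import Mathlib

open Set

namespace Stmt

/-- The `n`-cube `[-1,1]^n`. -/
abbrev Cube (n : ℕ) : Type := Fin n → (Set.Icc (-1 : ℝ) 1)

/-- The boundary `∂Iⁿ`: points having some coordinate equal to `1` or `-1`. -/
def cubeBoundary (n : ℕ) : Set (Cube n) :=
  {p | ∃ i : Fin n, (p i : ℝ) = 1 ∨ (p i : ℝ) = -1}

/-- The group of homeomorphisms of the `n`-cube fixing the boundary pointwise,
realized as a subgroup of the group of bijections of the cube. -/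
def HomeoCube (n : ℕ) : Subgroup (Equiv.Perm (Cube n)) where
  carrier := {f | Continuous f ∧ Continuous f.symm ∧ ∀ p ∈ cubeBoundary n, f p = p}
  one_mem' := ⟨continuous_id, continuous_id, fun _ _ => rfl⟩
  mul_mem' := by
    rintro a b ⟨ha1, ha2, ha3⟩ ⟨hb1, hb2, hb3⟩
    refine ⟨ha1.comp hb1, by exact hb2.comp ha2, fun p hp => ?_⟩
    show a (b p) = p
    rw [hb3 p hp, ha3 p hp]
  inv_mem' := by
    rintro a ⟨ha1, ha2, ha3⟩
    refine ⟨ha2, by exact ha1, fun p hp => ?_⟩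
    show a.symm p = p
    rw [Equiv.symm_apply_eq, ha3 p hp]

/-- A group `G` is bi-orderable if there is a strict total order `<` on `G` such that
`g < h` implies both `f*g < f*h` and `g*f < h*f` for all `f, g, h`. -/
def BiOrderable (G : Type*) [Group G] : Prop :=
  ∃ r : G → G → Prop, IsStrictTotalOrder G r ∧
    ∀ f g h : G, r g h → r (f * g) (f * h) ∧ r (g * f) (h * f)



noncomputable def hc (x : ℝ) : ℝ := x / (1 + |x|)
noncomputable def hi (y : ℝ) : ℝ := y / (1 - |y|)

lemma one_add_abs_pos (x : ℝ) : 0 < 1 + |x| := by positivity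

lemma abs_hc_lt_one (x : ℝ) : |hc x| < 1 := by
  rw [hc, abs_div, abs_of_pos (one_add_abs_pos x), div_lt_one (one_add_abs_pos x)]
  linarith

lemma abs_hc (x : ℝ) : |hc x| = |x| / (1 + |x|) := by
  rw [hc, abs_div, abs_of_pos (one_add_abs_pos x)]

lemma hi_hc (x : ℝ) : hi (hc x) = x := by
  rw [hi, abs_hc, hc]
  have h := one_add_abs_pos x
  field_simp
  ring

lemma abs_hi (y : ℝ) (hy : |y| < 1) : |hi y| = |y| / (1 - |y|) := by
  rw [hi, abs_div, abs_of_pos (by linarith : (0:ℝ) < 1 - |y|)]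

lemma hc_hi (y : ℝ) (hy : |y| < 1) : hc (hi y) = y := by
  rw [hc, abs_hi y hy, hi]
  have h : (0:ℝ) < 1 - |y| := by linarith
  field_simp
  ring

lemma hc_lipschitz (x y : ℝ) : |hc x - hc y| ≤ |x - y| := by
  have hx := one_add_abs_pos x
  have hy := one_add_abs_pos y
  have hd : (0:ℝ) < (1 + |x|) * (1 + |y|) := by positivity
  have e : hc x - hc y = (x - y + (x * |y| - y * |x|)) / ((1 + |x|) * (1 + |y|)) := by
    rw [hc, hc]; field_simp; ring
  rw [e, abs_div, abs_of_pos hd, div_le_iff₀ hd]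
  have h2 : abs (x * |y| - y * |x|) ≤ |x - y| * (|x| + |y|) := by
    rcases le_or_gt 0 x with hx0 | hx0 <;> rcases le_or_gt 0 y with hy0 | hy0
    · rw [abs_of_nonneg hx0, abs_of_nonneg hy0]
      have e0 : x * y - y * x = 0 := by ring
      rw [e0, abs_zero]
      exact mul_nonneg (abs_nonneg _) (by linarith)
    · rw [abs_of_nonneg hx0, abs_of_neg hy0, abs_of_pos (by linarith : (0:ℝ) < x - y),
        abs_of_nonneg (by nlinarith : (0:ℝ) ≤ x * -y - y * x)]
      nlinarith
    · rw [abs_of_neg hx0, abs_of_nonneg hy0, abs_of_neg (by linarith : x - y < 0),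
        abs_of_nonpos (by nlinarith : x * y - y * -x ≤ 0)]
      nlinarith
    · rw [abs_of_neg hx0, abs_of_neg hy0]
      have e0 : x * -y - y * -x = 0 := by ring
      rw [e0, abs_zero]
      exact mul_nonneg (abs_nonneg _) (by linarith)
  calc abs (x - y + (x * |y| - y * |x|)) ≤ |x - y| + abs (x * |y| - y * |x|) := abs_add_le _ _
    _ ≤ |x - y| + |x - y| * (|x| + |y|) := by linarith
    _ ≤ |x - y| * ((1 + |x|) * (1 + |y|)) := by nlinarith [abs_nonneg (x - y), abs_nonneg x, abs_nonneg y, mul_nonneg (abs_nonneg x) (abs_nonneg y)]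

lemma hc_cont : Continuous hc := by
  apply Continuous.div continuous_id (by continuity)
  intro x; exact ne_of_gt (one_add_abs_pos x)

lemma hi_contAt {y : ℝ} (hy : |y| < 1) : ContinuousAt hi y := by
  apply ContinuousAt.div continuousAt_id (by fun_prop)
  exact ne_of_gt (by linarith : (0:ℝ) < 1 - |y|)


lemma hc_odd (x : ℝ) : hc (-x) = - hc x := by
  rw [hc, hc, abs_neg, neg_div]

lemma hc_ge {W X : ℝ} (hX : 1 ≤ X) (hW : X - 1 ≤ W) : 1 - 1/X ≤ hc W := by
  have hW0 : 0 ≤ W := by linarith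
  have hX0 : 0 < X := by linarith
  rw [hc, abs_of_nonneg hW0, le_div_iff₀ (by linarith : (0:ℝ) < 1 + W)]
  have fact : X * (1/X) = 1 := mul_one_div_cancel (ne_of_gt hX0)
  nlinarith [one_div_pos.mpr hX0]

noncomputable def psi (f : ℝ → ℝ) (l y : ℝ) : ℝ :=
  if 0 < l ∧ |y| < 1 then hc (l * f (hi y / l)) else y

lemma psi_of_not {f : ℝ → ℝ} {l y : ℝ} (h : ¬ (0 < l ∧ |y| < 1)) : psi f l y = y := if_neg h

lemma abs_psi_le {f : ℝ → ℝ} {l y : ℝ} (hy : |y| ≤ 1) : |psi f l y| ≤ 1 := by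
  rw [psi]
  split
  · exact (abs_hc_lt_one _).le
  · exact hy

lemma psi_W_dist {f : ℝ → ℝ} (hf : ∀ x, |f x - x| ≤ 1) {l : ℝ} (hl : 0 < l) (X : ℝ) :
    |l * f (X / l) - X| ≤ l := by
  have e : l * f (X / l) - X = l * (f (X / l) - X / l) := by
    rw [mul_sub, mul_div_cancel₀ _ (ne_of_gt hl)]
  rw [e, abs_mul, abs_of_pos hl]
  simpa using mul_le_mul_of_nonneg_left (hf (X / l)) hl.le

lemma psi_inv {f g : ℝ → ℝ} (hgf : ∀ x, g (f x) = x) {l y : ℝ} :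
    psi g l (psi f l y) = y := by
  by_cases hcond : 0 < l ∧ |y| < 1
  · obtain ⟨hl, hy⟩ := hcond
    have e1 : psi f l y = hc (l * f (hi y / l)) := if_pos ⟨hl, hy⟩
    rw [e1]
    have e2 : psi g l (hc (l * f (hi y / l))) =
        hc (l * g (hi (hc (l * f (hi y / l))) / l)) := if_pos ⟨hl, abs_hc_lt_one _⟩
    rw [e2, hi_hc, mul_div_cancel_left₀ _ (ne_of_gt hl), hgf,
      mul_div_cancel₀ _ (ne_of_gt hl), hc_hi y hy]
  · rw [psi_of_not hcond, psi_of_not hcond]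

lemma psi_comp {A B A' C : ℝ → ℝ} (hrel : ∀ x, A (B (A' x)) = C x) {l y : ℝ} :
    psi A l (psi B l (psi A' l y)) = psi C l y := by
  by_cases hcond : 0 < l ∧ |y| < 1
  · obtain ⟨hl, hy⟩ := hcond
    have hl' := ne_of_gt hl
    have e1 : psi A' l y = hc (l * A' (hi y / l)) := if_pos ⟨hl, hy⟩
    have e2 : ∀ z, psi B l (hc (l * z)) = hc (l * B z) := fun z => by
      have : psi B l (hc (l * z)) = hc (l * B (hi (hc (l * z)) / l)) :=
        if_pos ⟨hl, abs_hc_lt_one _⟩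
      rw [this, hi_hc, mul_div_cancel_left₀ _ hl']
    have e3 : ∀ z, psi A l (hc (l * z)) = hc (l * A z) := fun z => by
      have : psi A l (hc (l * z)) = hc (l * A (hi (hc (l * z)) / l)) :=
        if_pos ⟨hl, abs_hc_lt_one _⟩
      rw [this, hi_hc, mul_div_cancel_left₀ _ hl']
    have e4 : psi C l y = hc (l * C (hi y / l)) := if_pos ⟨hl, hy⟩
    rw [e1, e2, e3, hrel, e4]
  · rw [psi_of_not hcond, psi_of_not hcond, psi_of_not hcond, psi_of_not hcond]

lemma psi_dist {f : ℝ → ℝ} (hf : ∀ x, |f x - x| ≤ 1) {l y : ℝ}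
    (hl0 : 0 ≤ l) (hl1 : l ≤ 1) (hy : |y| ≤ 1) :
    |psi f l y - y| ≤ min l (4 * (1 - |y|)) := by
  by_cases hcond : 0 < l ∧ |y| < 1
  · obtain ⟨hl, hy'⟩ := hcond
    rw [psi, if_pos ⟨hl, hy'⟩]
    set X := hi y with hXdef
    set W := l * f (X / l) with hWdef
    have hWX : |W - X| ≤ l := psi_W_dist hf hl X
    have hWX' : X - 1 ≤ W ∧ W ≤ X + 1 := by
      have := abs_le.mp hWX; constructor <;> linarith
    have hyX : hc X = y := hc_hi y hy'
    have bound1 : |hc W - y| ≤ l := by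
      calc |hc W - y| = |hc W - hc X| := by rw [hyX]
        _ ≤ |W - X| := hc_lipschitz W X
        _ ≤ l := hWX
    have bound2 : |hc W - y| ≤ 4 * (1 - |y|) := by
      rcases le_or_gt (|y|) (1/2) with hy2 | hy2
      · have h1 : |hc W - y| ≤ |hc W| + |y| := by
          rw [sub_eq_add_neg]
          exact (abs_add_le _ _).trans (by rw [abs_neg])
        linarith [abs_hc_lt_one W]
      · rcases lt_abs.mp hy2 with hypos | hyneg
        · have hy3 : |y| = y := abs_of_pos (by linarith)
          have hXeq : X = y / (1 - y) := by rw [hXdef, hi, hy3]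
          have hXpos : (0:ℝ) < 1 - y := by rw [hy3] at hy'; linarith
          have hX1 : 1 ≤ X := by
            rw [hXeq, le_div_iff₀ hXpos]; linarith
          have hge := hc_ge (W := W) hX1 (by linarith [hWX'.1])
          have hXinv : 1/X ≤ 2 * (1 - y) := by
            rw [hXeq, one_div_div, div_le_iff₀ (by linarith : (0:ℝ) < y)]
            nlinarith
          have hlt : hc W < 1 := (abs_lt.mp (abs_hc_lt_one W)).2
          rw [hy3]
          rw [abs_le]
          constructor <;> linarith
        · have hy3 : |y| = -y := abs_of_neg (by linarith)
          have hy4 : (0:ℝ) < 1 + y := by rw [hy3] at hy'; linarith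
          have hXeq : X = y / (1 + y) := by
            rw [hXdef, hi, hy3]; ring_nf
          have hmX : -X = (-y) / (1 + y) := by rw [hXeq]; ring
          have hX1 : 1 ≤ -X := by
            rw [hmX, le_div_iff₀ hy4]; linarith
          have hge := hc_ge (W := -W) hX1 (by linarith [hWX'.2] : -X - 1 ≤ -W)
          rw [hc_odd] at hge
          have hXinv : 1/(-X) ≤ 2 * (1 + y) := by
            rw [hmX, one_div_div, div_le_iff₀ (by linarith : (0:ℝ) < -y)]
            nlinarith
          have hlt : -1 < hc W := (abs_lt.mp (abs_hc_lt_one W)).1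
          rw [hy3]
          rw [abs_le]
          constructor <;> linarith
    exact le_min bound1 bound2
  · rw [psi_of_not hcond, sub_self, abs_zero]
    have := abs_nonneg y
    exact le_min hl0 (by linarith)



noncomputable def bb (x : ℝ) : ℝ :=
  (⌊x⌋ : ℝ) + if Even ⌊x⌋ then (Int.fract x)^2 else Real.sqrt (Int.fract x)

noncomputable def cc (x : ℝ) : ℝ :=
  (⌊x⌋ : ℝ) + if Even ⌊x⌋ then Real.sqrt (Int.fract x) else (Int.fract x)^2

lemma fract_mem (x : ℝ) : 0 ≤ Int.fract x ∧ Int.fract x < 1 :=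
  ⟨Int.fract_nonneg x, Int.fract_lt_one x⟩

lemma sq_mem {s : ℝ} (h0 : 0 ≤ s) (h1 : s < 1) : 0 ≤ s^2 ∧ s^2 < 1 :=
  ⟨sq_nonneg s, by nlinarith⟩

lemma sqrt_mem {s : ℝ} (h0 : 0 ≤ s) (h1 : s < 1) : 0 ≤ Real.sqrt s ∧ Real.sqrt s < 1 := by
  refine ⟨Real.sqrt_nonneg s, ?_⟩
  have := Real.sqrt_lt_sqrt h0 h1
  simpa using this

lemma floor_int_add_eq {n : ℤ} {s : ℝ} (h0 : 0 ≤ s) (h1 : s < 1) :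
    ⌊(n : ℝ) + s⌋ = n ∧ Int.fract ((n : ℝ) + s) = s := by
  constructor
  · rw [Int.floor_intCast_add]
    simp [Int.floor_eq_zero_iff, Set.mem_Ico.mpr ⟨h0, h1⟩]
  · rw [Int.fract_intCast_add, Int.fract_eq_self.mpr ⟨h0, h1⟩]

lemma bb_piece (x : ℝ) : (0 ≤ bb x - (⌊x⌋:ℝ) ∧ bb x - (⌊x⌋:ℝ) < 1) := by
  rw [bb]
  obtain ⟨h0, h1⟩ := fract_mem x
  split
  · have := sq_mem h0 h1; constructor <;> [linarith [this.1]; linarith [this.2]]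
  · have := sqrt_mem h0 h1; constructor <;> [linarith [this.1]; linarith [this.2]]

lemma cc_piece (x : ℝ) : (0 ≤ cc x - (⌊x⌋:ℝ) ∧ cc x - (⌊x⌋:ℝ) < 1) := by
  rw [cc]
  obtain ⟨h0, h1⟩ := fract_mem x
  split
  · have := sqrt_mem h0 h1; constructor <;> [linarith [this.1]; linarith [this.2]]
  · have := sq_mem h0 h1; constructor <;> [linarith [this.1]; linarith [this.2]]

lemma floor_bb (x : ℝ) : ⌊bb x⌋ = ⌊x⌋ ∧ Int.fract (bb x) = bb x - (⌊x⌋:ℝ) := by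
  obtain ⟨h0, h1⟩ := bb_piece x
  have e : bb x = (⌊x⌋:ℝ) + (bb x - (⌊x⌋:ℝ)) := by ring
  constructor
  · rw [e]; exact (floor_int_add_eq h0 h1).1
  · conv_lhs => rw [e]
    exact (floor_int_add_eq h0 h1).2

lemma floor_cc (x : ℝ) : ⌊cc x⌋ = ⌊x⌋ ∧ Int.fract (cc x) = cc x - (⌊x⌋:ℝ) := by
  obtain ⟨h0, h1⟩ := cc_piece x
  have e : cc x = (⌊x⌋:ℝ) + (cc x - (⌊x⌋:ℝ)) := by ring
  constructor
  · rw [e]; exact (floor_int_add_eq h0 h1).1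
  · conv_lhs => rw [e]
    exact (floor_int_add_eq h0 h1).2

lemma cc_bb (x : ℝ) : cc (bb x) = x := by
  obtain ⟨hfl, hfr⟩ := floor_bb x
  rw [cc, hfl, hfr, bb]
  by_cases hpar : Even ⌊x⌋
  · rw [if_pos hpar, if_pos hpar]
    have : (⌊x⌋:ℝ) + Int.fract x ^ 2 - (⌊x⌋:ℝ) = Int.fract x ^ 2 := by ring
    rw [this, Real.sqrt_sq (Int.fract_nonneg x), Int.floor_add_fract]
  · rw [if_neg hpar, if_neg hpar]
    have : (⌊x⌋:ℝ) + Real.sqrt (Int.fract x) - (⌊x⌋:ℝ) = Real.sqrt (Int.fract x) := by ring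
    rw [this, Real.sq_sqrt (Int.fract_nonneg x), Int.floor_add_fract]

lemma bb_cc (x : ℝ) : bb (cc x) = x := by
  obtain ⟨hfl, hfr⟩ := floor_cc x
  rw [bb, hfl, hfr, cc]
  by_cases hpar : Even ⌊x⌋
  · rw [if_pos hpar, if_pos hpar]
    have : (⌊x⌋:ℝ) + Real.sqrt (Int.fract x) - (⌊x⌋:ℝ) = Real.sqrt (Int.fract x) := by ring
    rw [this, Real.sq_sqrt (Int.fract_nonneg x), Int.floor_add_fract]
  · rw [if_neg hpar, if_neg hpar]
    have : (⌊x⌋:ℝ) + Int.fract x ^ 2 - (⌊x⌋:ℝ) = Int.fract x ^ 2 := by ring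
    rw [this, Real.sqrt_sq (Int.fract_nonneg x), Int.floor_add_fract]

lemma bb_bound (x : ℝ) : |bb x - x| ≤ 1 := by
  obtain ⟨h0, h1⟩ := bb_piece x
  have h2 := Int.fract_nonneg x
  have h3 := Int.fract_lt_one x
  have e : x = (⌊x⌋:ℝ) + Int.fract x := (Int.floor_add_fract x).symm
  rw [abs_le]
  constructor <;> nlinarith [h0, h1]

lemma cc_bound (x : ℝ) : |cc x - x| ≤ 1 := by
  obtain ⟨h0, h1⟩ := cc_piece x
  have h2 := Int.fract_nonneg x
  have h3 := Int.fract_lt_one x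
  have e : x = (⌊x⌋:ℝ) + Int.fract x := (Int.floor_add_fract x).symm
  rw [abs_le]
  constructor <;> nlinarith [h0, h1]

lemma bb_rel (x : ℝ) : bb (x - 1) + 1 = cc x := by
  have hfl : ⌊x - 1⌋ = ⌊x⌋ - 1 := by
    have := Int.floor_sub_intCast x 1
    simpa using this
  have hfr : Int.fract (x - 1) = Int.fract x := by
    have := Int.fract_sub_intCast x 1
    simpa using this
  have hpar : Even (⌊x⌋ - 1) ↔ ¬ Even ⌊x⌋ := Int.even_sub_one
  rw [bb, cc, hfl, hfr]
  by_cases hp : Even ⌊x⌋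
  · rw [if_neg (by simpa [hpar] using hp), if_pos hp]
    push_cast
    ring
  · rw [if_pos (hpar.mpr hp), if_neg hp]
    push_cast
    ring

lemma bb_half : bb (1/2 : ℝ) = 1/4 := by
  have hf : ⌊(1/2 : ℝ)⌋ = 0 := by
    rw [Int.floor_eq_zero_iff]
    constructor <;> norm_num
  have hfr : Int.fract (1/2 : ℝ) = 1/2 := Int.fract_eq_self.mpr ⟨by norm_num, by norm_num⟩
  rw [bb, hf, hfr, if_pos Even.zero]
  norm_num
noncomputable def GG (s : ℝ) : ℝ :=
  if 2*s ≤ 1 then (2*s)^2 - 2*s else Real.sqrt (2*s - 1) + 1 - 2*s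

noncomputable def HH (s : ℝ) : ℝ :=
  if 2*s ≤ 1 then Real.sqrt (2*s) - 2*s else (2*s - 1)^2 + 1 - 2*s

lemma GG_cont : Continuous GG := by
  apply Continuous.if_le (by fun_prop) (by fun_prop) (by fun_prop) continuous_const
  intro s hs
  rw [hs]
  norm_num

lemma HH_cont : Continuous HH := by
  apply Continuous.if_le (by fun_prop) (by fun_prop) (by fun_prop) continuous_const
  intro s hs
  rw [hs]
  norm_num


lemma bb_rep (x : ℝ) : bb x = x + GG (Int.fract (x / 2)) := by
  obtain ⟨t, htdef⟩ : ∃ t, Int.fract x = t := ⟨_, rfl⟩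
  have ht0 : 0 ≤ t := htdef ▸ Int.fract_nonneg x
  have ht1 : t < 1 := htdef ▸ Int.fract_lt_one x
  have hx : x = (⌊x⌋:ℝ) + t := by rw [← htdef, Int.floor_add_fract]
  by_cases hp : Even ⌊x⌋
  · obtain ⟨m, hm⟩ := hp
    have hx2 : x / 2 = (m:ℝ) + t/2 := by rw [hx, hm]; push_cast; ring
    have hfr : Int.fract (x/2) = t/2 := by
      rw [hx2]; exact (floor_int_add_eq (by linarith) (by linarith)).2
    rw [bb, if_pos ⟨m, hm⟩, htdef, GG, hfr, if_pos (by linarith : 2*(t/2) ≤ 1)]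
    linarith [hx]
  · have hp' : Odd ⌊x⌋ := Int.not_even_iff_odd.mp hp
    obtain ⟨m, hm⟩ := hp'
    have hx2 : x / 2 = (m:ℝ) + (1+t)/2 := by rw [hx, hm]; push_cast; ring
    have hfr : Int.fract (x/2) = (1+t)/2 := by
      rw [hx2]; exact (floor_int_add_eq (by linarith) (by linarith)).2
    rw [bb, if_neg hp, htdef, GG, hfr]
    rcases eq_or_lt_of_le ht0 with ht0' | ht0'
    · rw [if_pos (by linarith : 2*((1+t)/2) ≤ 1), ← ht0', Real.sqrt_zero]
      rw [← ht0'] at hx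
      norm_num
      linarith [hx]
    · rw [if_neg (by push_neg; linarith : ¬ 2*((1+t)/2) ≤ 1)]
      have e2 : 2*((1+t)/2) - 1 = t := by ring
      rw [e2]
      linarith [hx]

lemma cc_rep (x : ℝ) : cc x = x + HH (Int.fract (x / 2)) := by
  obtain ⟨t, htdef⟩ : ∃ t, Int.fract x = t := ⟨_, rfl⟩
  have ht0 : 0 ≤ t := htdef ▸ Int.fract_nonneg x
  have ht1 : t < 1 := htdef ▸ Int.fract_lt_one x
  have hx : x = (⌊x⌋:ℝ) + t := by rw [← htdef, Int.floor_add_fract]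
  by_cases hp : Even ⌊x⌋
  · obtain ⟨m, hm⟩ := hp
    have hx2 : x / 2 = (m:ℝ) + t/2 := by rw [hx, hm]; push_cast; ring
    have hfr : Int.fract (x/2) = t/2 := by
      rw [hx2]; exact (floor_int_add_eq (by linarith) (by linarith)).2
    rw [cc, if_pos ⟨m, hm⟩, htdef, HH, hfr, if_pos (by linarith : 2*(t/2) ≤ 1)]
    have e2 : 2*(t/2) = t := by ring
    rw [e2]
    linarith [hx]
  · have hp' : Odd ⌊x⌋ := Int.not_even_iff_odd.mp hp
    obtain ⟨m, hm⟩ := hp'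
    have hx2 : x / 2 = (m:ℝ) + (1+t)/2 := by rw [hx, hm]; push_cast; ring
    have hfr : Int.fract (x/2) = (1+t)/2 := by
      rw [hx2]; exact (floor_int_add_eq (by linarith) (by linarith)).2
    rw [cc, if_neg hp, htdef, HH, hfr]
    rcases eq_or_lt_of_le ht0 with ht0' | ht0'
    · rw [if_pos (by linarith : 2*((1+t)/2) ≤ 1), ← ht0']
      norm_num
      rw [← ht0'] at hx
      linarith [hx]
    · rw [if_neg (by push_neg; linarith : ¬ 2*((1+t)/2) ≤ 1)]
      linarith [hx]

lemma comp_fract_cont {F : ℝ → ℝ} (hF : Continuous F) (h01 : F 0 = F 1) :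
    Continuous fun x : ℝ => F (Int.fract (x / 2)) :=
  ContinuousOn.comp_fract (f := fun (_ : ℝ) y => F y)
    (hF.comp continuous_snd).continuousOn (continuous_id.div_const 2) (fun _ => h01)

lemma bb_cont : Continuous bb := by
  have : bb = fun x => x + GG (Int.fract (x / 2)) := funext bb_rep
  rw [this]
  exact continuous_id.add (comp_fract_cont GG_cont (by rw [GG, GG]; norm_num))

lemma cc_cont : Continuous cc := by
  have : cc = fun x => x + HH (Int.fract (x / 2)) := funext cc_rep
  rw [this]
  exact continuous_id.add (comp_fract_cont HH_cont (by rw [HH, HH]; norm_num))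

variable {n : ℕ}

lemma coord_abs_le (p : Cube n) (i : Fin n) : |(p i : ℝ)| ≤ 1 := by
  have h := (p i).2
  rw [Set.mem_Icc] at h
  exact abs_le.mpr ⟨h.1, h.2⟩

noncomputable def lam (hn : 1 ≤ n) (p : Cube n) : ℝ :=
  ∏ i ∈ Finset.univ.erase (⟨0, hn⟩ : Fin n), (1 - (p i : ℝ)^2)

lemma factor_mem (p : Cube n) (i : Fin n) : 0 ≤ 1 - (p i : ℝ)^2 ∧ 1 - (p i : ℝ)^2 ≤ 1 := by
  have h := coord_abs_le p i
  have h2 : (p i : ℝ)^2 ≤ 1 := by nlinarith [abs_nonneg (p i : ℝ), sq_abs (p i : ℝ)]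
  constructor
  · linarith
  · nlinarith [sq_nonneg (p i : ℝ)]

lemma lam_nonneg (hn : 1 ≤ n) (p : Cube n) : 0 ≤ lam hn p :=
  Finset.prod_nonneg fun i _ => (factor_mem p i).1

lemma lam_le_one (hn : 1 ≤ n) (p : Cube n) : lam hn p ≤ 1 :=
  Finset.prod_le_one (fun i _ => (factor_mem p i).1) (fun i _ => (factor_mem p i).2)

lemma lam_cont (hn : 1 ≤ n) : Continuous (lam hn) := by
  apply continuous_finset_prod
  intro i _
  exact continuous_const.sub ((continuous_subtype_val.comp (continuous_apply i)).pow 2)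

lemma lam_eq_zero (hn : 1 ≤ n) (p : Cube n) (i : Fin n) (hi : i ≠ ⟨0, hn⟩)
    (habs : ((p i : ℝ) = 1 ∨ (p i : ℝ) = -1)) : lam hn p = 0 := by
  apply Finset.prod_eq_zero (Finset.mem_erase.mpr ⟨hi, Finset.mem_univ i⟩)
  rcases habs with h | h <;> rw [h] <;> norm_num

lemma mem_of_abs {y : ℝ} (h : |y| ≤ 1) : y ∈ Set.Icc (-1:ℝ) 1 := by
  rw [Set.mem_Icc]
  exact ⟨(abs_le.mp h).1, (abs_le.mp h).2⟩

noncomputable def cmap (f : ℝ → ℝ) (hn : 1 ≤ n) (p : Cube n) : Cube n := fun i =>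
  if i = (⟨0, hn⟩ : Fin n) then
    ⟨psi f (lam hn p) (p ⟨0, hn⟩ : ℝ), mem_of_abs (abs_psi_le (coord_abs_le p _))⟩
  else p i

lemma cmap_apply_ne (f : ℝ → ℝ) (hn : 1 ≤ n) (p : Cube n) {i : Fin n}
    (hi : i ≠ ⟨0, hn⟩) : cmap f hn p i = p i := if_neg hi

lemma cmap_apply_eq (f : ℝ → ℝ) (hn : 1 ≤ n) (p : Cube n) :
    (cmap f hn p ⟨0, hn⟩ : ℝ) = psi f (lam hn p) (p ⟨0, hn⟩ : ℝ) := by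
  rw [cmap, if_pos rfl]

lemma lam_cmap (f : ℝ → ℝ) (hn : 1 ≤ n) (p : Cube n) : lam hn (cmap f hn p) = lam hn p := by
  apply Finset.prod_congr rfl
  intro i hi
  rw [cmap_apply_ne f hn p (Finset.mem_erase.mp hi).1]

lemma cmap_cmap {f g : ℝ → ℝ} (hgf : ∀ x, g (f x) = x) (hn : 1 ≤ n) (p : Cube n) :
    cmap g hn (cmap f hn p) = p := by
  funext i
  by_cases hi : i = (⟨0, hn⟩ : Fin n)
  · subst hi
    apply Subtype.ext
    rw [cmap_apply_eq, lam_cmap, cmap_apply_eq]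
    exact psi_inv hgf
  · rw [cmap_apply_ne g hn _ hi, cmap_apply_ne f hn p hi]

lemma cmap_comp {A B A' C : ℝ → ℝ} (hrel : ∀ x, A (B (A' x)) = C x) (hn : 1 ≤ n)
    (p : Cube n) : cmap A hn (cmap B hn (cmap A' hn p)) = cmap C hn p := by
  funext i
  by_cases hi : i = (⟨0, hn⟩ : Fin n)
  · subst hi
    apply Subtype.ext
    rw [cmap_apply_eq, lam_cmap, lam_cmap, cmap_apply_eq, lam_cmap, cmap_apply_eq,
      cmap_apply_eq]
    exact psi_comp hrel
  · rw [cmap_apply_ne A hn _ hi, cmap_apply_ne B hn _ hi, cmap_apply_ne A' hn _ hi,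
      cmap_apply_ne C hn _ hi]

lemma cmap_boundary (f : ℝ → ℝ) (hn : 1 ≤ n) (p : Cube n) (hp : p ∈ cubeBoundary n) :
    cmap f hn p = p := by
  obtain ⟨i, hi⟩ := hp
  have hpsi : psi f (lam hn p) (p ⟨0, hn⟩ : ℝ) = (p ⟨0, hn⟩ : ℝ) := by
    by_cases hii : i = (⟨0, hn⟩ : Fin n)
    · subst hii
      apply psi_of_not
      rintro ⟨-, habs⟩
      rcases hi with h | h <;> rw [h] at habs <;> simp at habs
    · apply psi_of_not
      rw [lam_eq_zero hn p i hii hi]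
      rintro ⟨h, -⟩
      exact lt_irrefl 0 h
  funext j
  by_cases hj : j = (⟨0, hn⟩ : Fin n)
  · subst hj
    apply Subtype.ext
    rw [cmap_apply_eq, hpsi]
  · exact cmap_apply_ne f hn p hj

lemma theta_cont {f : ℝ → ℝ} (hfc : Continuous f) (hfb : ∀ x, |f x - x| ≤ 1) (hn : 1 ≤ n) :
    Continuous (fun p : Cube n => psi f (lam hn p) (p ⟨0, hn⟩ : ℝ)) := by
  rw [continuous_iff_continuousAt]
  intro p
  have hy0c : Continuous (fun q : Cube n => (q ⟨0, hn⟩ : ℝ)) :=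
    continuous_subtype_val.comp (continuous_apply _)
  have hlamc : Continuous (lam hn) := lam_cont hn
  by_cases hgood : 0 < lam hn p ∧ |(p ⟨0, hn⟩ : ℝ)| < 1
  · have hopen : IsOpen {q : Cube n | 0 < lam hn q ∧ |(q ⟨0, hn⟩ : ℝ)| < 1} :=
      (isOpen_lt continuous_const hlamc).inter (isOpen_lt hy0c.abs continuous_const)
    have hev : ∀ᶠ q in nhds p,
        (fun q : Cube n => psi f (lam hn q) (q ⟨0, hn⟩ : ℝ)) q
          = (fun q : Cube n => hc (lam hn q * f (hi (q ⟨0, hn⟩ : ℝ) / lam hn q))) q :=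
      Filter.eventually_of_mem (hopen.mem_nhds hgood) (fun q hq => if_pos hq)
    refine ContinuousAt.congr_of_eventuallyEq ?_ hev
    have h1 : ContinuousAt (fun q : Cube n => hi (q ⟨0, hn⟩ : ℝ)) p :=
      ContinuousAt.comp (f := fun q : Cube n => (q ⟨0, hn⟩ : ℝ))
        (hi_contAt hgood.2) hy0c.continuousAt
    have h2 : ContinuousAt (fun q : Cube n => hi (q ⟨0, hn⟩ : ℝ) / lam hn q) p :=
      h1.div hlamc.continuousAt (ne_of_gt hgood.1)
    have h3 : ContinuousAt (fun q : Cube n => lam hn q * f (hi (q ⟨0, hn⟩ : ℝ) / lam hn q)) p :=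
      hlamc.continuousAt.mul (hfc.continuousAt.comp h2)
    exact hc_cont.continuousAt.comp h3
  · have hMc : Continuous (fun q : Cube n => min (lam hn q) (4 * (1 - |(q ⟨0, hn⟩ : ℝ)|))) :=
      hlamc.min (continuous_const.mul (continuous_const.sub hy0c.abs))
    have hM0 : min (lam hn p) (4 * (1 - |(p ⟨0, hn⟩ : ℝ)|)) = 0 := by
      have h1 := lam_nonneg hn p
      have h2 := coord_abs_le p (⟨0, hn⟩ : Fin n)
      rcases not_and_or.mp hgood with h | h
      · have : lam hn p = 0 := le_antisymm (not_lt.mp h) h1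
        rw [this]
        rw [min_eq_left]
        linarith
      · have : |(p ⟨0, hn⟩ : ℝ)| = 1 := le_antisymm h2 (not_lt.mp h)
        rw [this]
        rw [min_eq_right] <;> norm_num
        exact h1
    have hub : ∀ q : Cube n, psi f (lam hn q) (q ⟨0, hn⟩ : ℝ) ≤
        (q ⟨0, hn⟩ : ℝ) + min (lam hn q) (4 * (1 - |(q ⟨0, hn⟩ : ℝ)|)) := fun q => by
      have := abs_le.mp (psi_dist hfb (lam_nonneg hn q) (lam_le_one hn q) (coord_abs_le q ⟨0, hn⟩))
      linarith [this.2]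
    have hlb : ∀ q : Cube n, (q ⟨0, hn⟩ : ℝ) - min (lam hn q) (4 * (1 - |(q ⟨0, hn⟩ : ℝ)|)) ≤
        psi f (lam hn q) (q ⟨0, hn⟩ : ℝ) := fun q => by
      have := abs_le.mp (psi_dist hfb (lam_nonneg hn q) (lam_le_one hn q) (coord_abs_le q ⟨0, hn⟩))
      linarith [this.1]
    have hval : psi f (lam hn p) (p ⟨0, hn⟩ : ℝ) = (p ⟨0, hn⟩ : ℝ) := psi_of_not hgood
    show Filter.Tendsto (fun q : Cube n => psi f (lam hn q) (q ⟨0, hn⟩ : ℝ)) (nhds p)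
      (nhds (psi f (lam hn p) (p ⟨0, hn⟩ : ℝ)))
    rw [hval]
    have hlo : Filter.Tendsto
        (fun q : Cube n => (q ⟨0, hn⟩ : ℝ) - min (lam hn q) (4 * (1 - |(q ⟨0, hn⟩ : ℝ)|)))
        (nhds p) (nhds ((p ⟨0, hn⟩ : ℝ))) := by
      have h := (hy0c.sub hMc).continuousAt (x := p)
      unfold ContinuousAt at h
      simp only [Pi.sub_apply] at h
      rw [hM0, sub_zero] at h
      exact h
    have hhi : Filter.Tendsto
        (fun q : Cube n => (q ⟨0, hn⟩ : ℝ) + min (lam hn q) (4 * (1 - |(q ⟨0, hn⟩ : ℝ)|)))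
        (nhds p) (nhds ((p ⟨0, hn⟩ : ℝ))) := by
      have h := (hy0c.add hMc).continuousAt (x := p)
      unfold ContinuousAt at h
      simp only [Pi.add_apply] at h
      rw [hM0, add_zero] at h
      exact h
    exact tendsto_of_tendsto_of_tendsto_of_le_of_le hlo hhi hlb hub

lemma cmap_cont {f : ℝ → ℝ} (hfc : Continuous f) (hfb : ∀ x, |f x - x| ≤ 1) (hn : 1 ≤ n) :
    Continuous (cmap f hn) := by
  apply continuous_pi
  intro i
  by_cases hi : i = (⟨0, hn⟩ : Fin n)
  · subst hi
    have : (fun p : Cube n => cmap f hn p ⟨0, hn⟩) = fun p =>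
        (⟨psi f (lam hn p) (p ⟨0, hn⟩ : ℝ), mem_of_abs (abs_psi_le (coord_abs_le p _))⟩ :
          Set.Icc (-1:ℝ) 1) := by
      funext p
      rw [cmap, if_pos rfl]
    rw [this]
    exact Continuous.subtype_mk (theta_cont hfc hfb hn) _
  · have : (fun p : Cube n => cmap f hn p i) = fun p => p i := by
      funext p
      exact cmap_apply_ne f hn p hi
    rw [this]
    exact continuous_apply i


noncomputable def cperm (f g : ℝ → ℝ) (hgf : ∀ x, g (f x) = x) (hfg : ∀ x, f (g x) = x)
    (hn : 1 ≤ n) : Equiv.Perm (Cube n) :=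
  ⟨cmap f hn, cmap g hn, cmap_cmap hgf hn, cmap_cmap hfg hn⟩

lemma cperm_mem {f g : ℝ → ℝ} (hgf : ∀ x, g (f x) = x) (hfg : ∀ x, f (g x) = x)
    (hfc : Continuous f) (hgc : Continuous g)
    (hfb : ∀ x, |f x - x| ≤ 1) (hgb : ∀ x, |g x - x| ≤ 1) (hn : 1 ≤ n) :
    cperm f g hgf hfg hn ∈ HomeoCube n := by
  refine ⟨cmap_cont hfc hfb hn, ?_, ?_⟩
  · show Continuous (cperm f g hgf hfg hn).symm
    have : ⇑(cperm f g hgf hfg hn).symm = cmap g hn := rfl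
    rw [this]
    exact cmap_cont hgc hgb hn
  · intro p hp
    exact cmap_boundary f hn p hp

noncomputable def aMap : ℝ → ℝ := fun x => x + 1
noncomputable def aInv : ℝ → ℝ := fun x => x - 1

lemma aMap_facts : (∀ x, aInv (aMap x) = x) ∧ (∀ x, aMap (aInv x) = x) ∧
    (∀ x, |aMap x - x| ≤ 1) ∧ (∀ x, |aInv x - x| ≤ 1) := by
  refine ⟨fun x => by simp [aMap, aInv], fun x => by simp [aMap, aInv], fun x => ?_, fun x => ?_⟩
  · simp [aMap]
  · simp [aInv]

noncomputable def elA (hn : 1 ≤ n) : HomeoCube n :=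
  ⟨cperm aMap aInv aMap_facts.1 aMap_facts.2.1 hn,
    cperm_mem aMap_facts.1 aMap_facts.2.1 (by unfold aMap; fun_prop) (by unfold aInv; fun_prop)
      aMap_facts.2.2.1 aMap_facts.2.2.2 hn⟩

noncomputable def elB (hn : 1 ≤ n) : HomeoCube n :=
  ⟨cperm bb cc cc_bb bb_cc hn,
    cperm_mem cc_bb bb_cc bb_cont cc_cont bb_bound cc_bound hn⟩

lemma conj_rel (hn : 1 ≤ n) : elA hn * elB hn * (elA hn)⁻¹ = (elB hn)⁻¹ := by
  apply Subtype.ext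
  apply Equiv.ext
  intro p
  show cmap aMap hn (cmap bb hn (cmap aInv hn p)) = cmap cc hn p
  exact cmap_comp (fun x => bb_rel x) hn p

noncomputable def witness (hn : 1 ≤ n) : Cube n := fun i =>
  if i = (⟨0, hn⟩ : Fin n) then ⟨1/3, by norm_num⟩ else ⟨0, by norm_num⟩

lemma lam_witness (hn : 1 ≤ n) : lam hn (witness hn) = 1 := by
  apply Finset.prod_eq_one
  intro i hi
  have hne : i ≠ (⟨0, hn⟩ : Fin n) := (Finset.mem_erase.mp hi).1
  rw [witness]
  rw [if_neg hne]
  norm_num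

lemma hi_third : hi (1/3 : ℝ) = 1/2 := by
  rw [hi]
  rw [abs_of_pos (by norm_num : (0:ℝ) < 1/3)]
  norm_num

lemma psi_bb_third : psi bb 1 (1/3 : ℝ) = 1/5 := by
  rw [psi, if_pos ⟨one_pos, by rw [abs_of_pos]; norm_num; norm_num⟩, hi_third]
  norm_num [bb_half]
  rw [hc, abs_of_pos (by norm_num : (0:ℝ) < 1/4)]
  norm_num

lemma elB_ne_one (hn : 1 ≤ n) : elB hn ≠ 1 := by
  intro h
  have h2 : (elB hn : Equiv.Perm (Cube n)) (witness hn) = witness hn := by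
    rw [h]; rfl
  have h3 : (cmap bb hn (witness hn) ⟨0, hn⟩ : ℝ) = ((witness hn) ⟨0, hn⟩ : ℝ) := by
    rw [show cmap bb hn (witness hn) = witness hn from h2]
  rw [cmap_apply_eq, lam_witness] at h3
  have h4 : ((witness hn) ⟨0, hn⟩ : ℝ) = 1/3 := by rw [witness, if_pos rfl]
  rw [h4, psi_bb_third] at h3
  norm_num at h3


/-- For every `n ≥ 1`, the group `Homeo(Iⁿ, ∂Iⁿ)` is not bi-orderable. -/
theorem homeoCube_not_biOrderable (n : ℕ) (hn : 1 ≤ n) :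
    ¬ BiOrderable (Stmt.HomeoCube n) := by
  rintro ⟨r, hsto, hmul⟩
  set A := elA hn
  set B := elB hn
  have hconj : A * B * A⁻¹ = B⁻¹ := conj_rel hn
  have hBne : B ≠ 1 := elB_ne_one hn
  have key : ∀ g : HomeoCube n, r g 1 → r (A * g * A⁻¹) 1 := by
    intro g hg
    have h1 := (hmul A g 1 hg).1
    rw [mul_one] at h1
    have h2 := (hmul A⁻¹ (A * g) A h1).2
    rw [mul_inv_cancel] at h2
    exact h2
  have key' : ∀ g : HomeoCube n, r 1 g → r 1 (A * g * A⁻¹) := by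
    intro g hg
    have h1 := (hmul A 1 g hg).1
    rw [mul_one] at h1
    have h2 := (hmul A⁻¹ A (A * g) h1).2
    rw [mul_inv_cancel] at h2
    exact h2
  rcases (haveI := hsto; trichotomous_of r B 1) with hB | hB | hB
  · -- r B 1
    have h1 : r B⁻¹ 1 := hconj ▸ key B hB
    have h2 : r 1 B⁻¹ := by
      have := (hmul B⁻¹ B 1 hB).1
      rw [inv_mul_cancel, mul_one] at this
      exact this
    exact hsto.irrefl _ (hsto.trans _ _ _ h2 h1)
  · exact hBne hB
  · have h1 : r 1 B⁻¹ := hconj ▸ key' B hB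
    have h2 : r B⁻¹ 1 := by
      have := (hmul B⁻¹ 1 B hB).1
      rw [inv_mul_cancel, mul_one] at this
      exact this
    exact hsto.irrefl _ (hsto.trans _ _ _ h1 h2)


end Stmt
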